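/- arXiv:2003.04718 — 4 statements merged into one kernel-verified Lean document; each statement's English description precedes it below -/
import Mathlib

section
/- Let α > -1 and δ > 0. The function U_δ(x) = log( 8(1+α)² δ^{2(1+α)} / (δ^{2(1+α)} + |x|^{2(1+α)})² ) defined on ℝ² satisfies -ΔU_δ(x) = |x|^{2α} e^{U_δ(x)} for all x ≠ 0. -/
open MeasureTheory Real

/-- The Laplacian of a function on `ℝ²`, as the sum of second directional
derivatives along the standard coordinate directions. -/
noncomputable def laplacian (f : EuclideanSpace ℝ (Fin 2) → ℝ)
    (x : EuclideanSpace ℝ (Fin 2)) : ℝ :=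
  ∑ i : Fin 2, iteratedDeriv 2 (fun t : ℝ => f (x + t • EuclideanSpace.single i (1 : ℝ))) 0

lemma aux_second_deriv (β A c s b : ℝ) (hA : 0 < A) (hs : 0 < s) :
    iteratedDeriv 2 (fun t : ℝ => c - 2 * Real.log (A + (s + b * t + t ^ 2) ^ β)) 0
      = ((-2 * β * ((β - 1) * s ^ (β - 2))) * (A + s ^ β)
          - (-2 * β * s ^ (β - 1)) * (β * s ^ (β - 1))) / (A + s ^ β) ^ 2 * b ^ 2
        + 2 * (-2 * β * s ^ (β - 1) / (A + s ^ β)) := by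
  set q : ℝ → ℝ := fun t => s + b * t + t ^ 2 with hqdef
  have h0 : q 0 = s := by simp [hqdef]
  have hq : ∀ t : ℝ, HasDerivAt q (b + 2 * t) t := by
    intro t
    have h1 : HasDerivAt (fun t : ℝ => s + b * t + t ^ 2) (0 + b * 1 + 2 * t) t :=
      ((hasDerivAt_const t s).add ((hasDerivAt_id t).const_mul b)).add
        (by simpa using hasDerivAt_pow 2 t)
    simpa using h1
  have hden : ∀ u : ℝ, 0 < u → HasDerivAt (fun u : ℝ => A + u ^ β) (β * u ^ (β - 1)) u :=
    fun u hu => (Real.hasDerivAt_rpow_const (Or.inl hu.ne')).const_add A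
  have hdenne : ∀ u : ℝ, 0 < u → A + u ^ β ≠ 0 := by
    intro u hu; positivity
  have hφ : ∀ u : ℝ, 0 < u →
      HasDerivAt (fun u : ℝ => c - 2 * Real.log (A + u ^ β))
        (-(2 * (β * u ^ (β - 1) / (A + u ^ β)))) u := fun u hu =>
    (((hden u hu).log (hdenne u hu)).const_mul 2).const_sub c
  have hqc : Continuous q := by fun_prop
  have hev : ∀ᶠ t in nhds (0 : ℝ), 0 < q t := by
    have := (hqc.continuousAt (x := (0 : ℝ))).eventually_mem
      (show Set.Ioi (0:ℝ) ∈ nhds (q 0) by rw [h0]; exact Ioi_mem_nhds hs)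
    filter_upwards [this] with t ht using ht
  have hg : ∀ t : ℝ, 0 < q t →
      HasDerivAt (fun t => c - 2 * Real.log (A + q t ^ β))
        (-(2 * (β * q t ^ (β - 1) / (A + q t ^ β))) * (b + 2 * t)) t := fun t ht =>
    (hφ (q t) ht).comp t (hq t)
  have hderiv_ev : deriv (fun t => c - 2 * Real.log (A + q t ^ β))
      =ᶠ[nhds (0 : ℝ)] fun t => -(2 * (β * q t ^ (β - 1) / (A + q t ^ β))) * (b + 2 * t) := by
    filter_upwards [hev] with t ht using (hg t ht).deriv
  have hnum : HasDerivAt (fun u : ℝ => -2 * β * u ^ (β - 1))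
      (-2 * β * ((β - 1) * s ^ (β - 2))) s := by
    have := (Real.hasDerivAt_rpow_const (p := β - 1) (Or.inl hs.ne')).const_mul (-2 * β)
    simpa [show β - 1 - 1 = β - 2 by ring] using this
  have hψ : HasDerivAt (fun u : ℝ => -2 * β * u ^ (β - 1) / (A + u ^ β))
      (((-2 * β * ((β - 1) * s ^ (β - 2))) * (A + s ^ β)
          - (-2 * β * s ^ (β - 1)) * (β * s ^ (β - 1))) / (A + s ^ β) ^ 2) s :=
    hnum.div (hden s hs) (hdenne s hs)
  rw [← h0] at hψ
  have hlin : HasDerivAt (fun t : ℝ => b + 2 * t) 2 0 := by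
    simpa using ((hasDerivAt_id (0:ℝ)).const_mul 2).const_add b
  have hG := (hψ.comp 0 (hq 0)).mul hlin
  rw [iteratedDeriv_succ, iteratedDeriv_one, hderiv_ev.deriv_eq]
  have hFG : (fun t : ℝ => -(2 * (β * q t ^ (β - 1) / (A + q t ^ β))) * (b + 2 * t))
      = fun t : ℝ => ((fun u : ℝ => -2 * β * u ^ (β - 1) / (A + u ^ β)) ∘ q) t * (b + 2 * t) := by
    funext t; simp [Function.comp]; ring
  rw [hFG, show (fun t : ℝ => ((fun u : ℝ => -2 * β * u ^ (β - 1) / (A + u ^ β)) ∘ q) t * (b + 2 * t)) = ((fun u : ℝ => -2 * β * u ^ (β - 1) / (A + u ^ β)) ∘ q * fun t => b + 2 * t) from rfl, hG.deriv]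
  simp only [Function.comp_apply, h0]
  ring

theorem stmt0 (α δ : ℝ) (hα : α > -1) (hδ : δ > 0)
    (U : EuclideanSpace ℝ (Fin 2) → ℝ)
    (hU : ∀ x, U x =
      Real.log (8 * (1 + α) ^ 2 * δ ^ (2 * (1 + α)) /
        (δ ^ (2 * (1 + α)) + ‖x‖ ^ (2 * (1 + α))) ^ 2)) :
    ∀ x : EuclideanSpace ℝ (Fin 2), x ≠ 0 →
      -laplacian U x = ‖x‖ ^ (2 * α) * Real.exp (U x) := by
  intro x hx
  have hβ : (0:ℝ) < 1 + α := by linarith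
  have hA : (0:ℝ) < δ ^ (2 * (1 + α)) := Real.rpow_pos_of_pos hδ _
  have hxn : ‖x‖ ≠ 0 := norm_ne_zero_iff.mpr hx
  have hs : (0:ℝ) < ‖x‖ ^ 2 := by positivity
  set β := 1 + α with hβdef
  set A := δ ^ (2 * β) with hAdef
  set s := ‖x‖ ^ 2 with hsdef
  set c := Real.log (8 * β ^ 2 * A) with hcdef
  have hNpos : (0:ℝ) < 8 * β ^ 2 * A :=
    mul_pos (mul_pos (by norm_num) (pow_pos hβ 2)) hA
  have hr2 : ∀ y : ℝ, y ^ (2:ℝ) = y ^ 2 := fun y => by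
    rw [show (2:ℝ) = ((2:ℕ):ℝ) by norm_num, Real.rpow_natCast]
  have hnorm2 : ∀ y : EuclideanSpace ℝ (Fin 2), ‖y‖ ^ (2*β) = (‖y‖^2) ^ β := by
    intro y
    rw [Real.rpow_mul (norm_nonneg y), hr2]
  have hUy : ∀ y, U y = c - 2 * Real.log (A + (‖y‖^2) ^ β) := by
    intro y
    rw [hU y, Real.log_div hNpos.ne' (by positivity), Real.log_pow, hnorm2 y, hcdef]
    push_cast; ring
  have hexp2 : ∀ (i : Fin 2) (t : ℝ),
      ‖x + t • EuclideanSpace.single i (1:ℝ)‖ ^ 2 = s + (2 * x i) * t + t ^ 2 := by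
    intro i t
    rw [norm_add_sq_real, real_inner_smul_right, norm_smul]
    have h1 : (inner ℝ x (EuclideanSpace.single i (1:ℝ)) : ℝ) = x i := by
      rw [EuclideanSpace.inner_single_right]; simp
    rw [h1, ← hsdef]
    simp [Real.norm_eq_abs, mul_pow, sq_abs]
    ring
  have hkey : ∀ i : Fin 2, (fun t : ℝ => U (x + t • EuclideanSpace.single i (1:ℝ)))
      = fun t : ℝ => c - 2 * Real.log (A + (s + (2 * x i) * t + t ^ 2) ^ β) := by
    intro i; funext t; rw [hUy, hexp2 i t]
  set Dψ := ((-2 * β * ((β - 1) * s ^ (β - 2))) * (A + s ^ β)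
      - (-2 * β * s ^ (β - 1)) * (β * s ^ (β - 1))) / (A + s ^ β) ^ 2 with hDψdef
  set ψ := -2 * β * s ^ (β - 1) / (A + s ^ β) with hψdef
  have hlapi : ∀ i : Fin 2,
      iteratedDeriv 2 (fun t : ℝ => U (x + t • EuclideanSpace.single i (1:ℝ))) 0
        = Dψ * (2 * x i) ^ 2 + 2 * ψ := by
    intro i; rw [hkey i]; exact aux_second_deriv β A c s (2 * x i) hA hs
  have hxsum : x 0 ^ 2 + x 1 ^ 2 = s := by
    rw [hsdef, EuclideanSpace.norm_eq, Real.sq_sqrt (by positivity)]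
    simp [Fin.sum_univ_two, Real.norm_eq_abs, sq_abs]
  have hlap : laplacian U x = Dψ * (4 * s) + 4 * ψ := by
    simp only [laplacian, hlapi, Fin.sum_univ_two]
    linear_combination 4 * Dψ * hxsum
  have hrpowα : ‖x‖ ^ (2*α) = s ^ (β - 1) := by
    rw [show (2:ℝ)*α = 2*(β-1) by rw [hβdef]; ring, Real.rpow_mul (norm_nonneg x), hr2, ← hsdef]
  have hexpU : Real.exp (U x) = (8 * β ^ 2 * A) / (A + s ^ β) ^ 2 := by
    rw [hU x, hnorm2 x, ← hsdef, Real.exp_log (by positivity)]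
  rw [hlap, hrpowα, hexpU, hDψdef, hψdef]
  have hp2 : s ^ (β - 2) * s = s ^ (β - 1) := by
    have h := Real.rpow_add hs (β - 2) 1
    rw [Real.rpow_one, show β - 2 + 1 = β - 1 by ring] at h
    exact h.symm
  have hp1' : s ^ (β - 2) * s * s = s ^ β := by
    rw [hp2]
    have h := Real.rpow_add hs (β - 1) 1
    rw [Real.rpow_one, show β - 1 + 1 = β by ring] at h
    exact h.symm
  rw [← hp1', ← hp2]
  have hsp : (0:ℝ) < s ^ (β - 2) := Real.rpow_pos_of_pos (by positivity) _
  have hDne : A + s ^ (β - 2) * s * s ≠ 0 := by positivity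
  field_simp
  ring
end

section
/- For α > -1, the function Z_q(z) = (|z|^{2(1+α)} - 1)/(|z|^{2(1+α)} + 1) satisfies the linearized Liouville equation Δ Z_q + (8(1+α)² |z|^{2α} / (1+|z|^{2(1+α)})²) Z_q = 0 for all z ∈ ℝ² with z ≠ 0. -/
open MeasureTheory Real

lemma iteratedDeriv_two' (f : ℝ → ℝ) : iteratedDeriv 2 f = deriv (deriv f) := by
  rw [show (2:ℕ) = 1 + 1 from rfl, iteratedDeriv_succ, iteratedDeriv_succ, iteratedDeriv_zero]

noncomputable def Gf (β x : ℝ) : ℝ := (x ^ β - 1) / (x ^ β + 1)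

noncomputable def Gf1 (β x : ℝ) : ℝ := 2 * β * x ^ (β - 1) / (x ^ β + 1) ^ 2

noncomputable def Gf2 (β x : ℝ) : ℝ :=
  (2 * β * (β - 1) * x ^ (β - 2) * (x ^ β + 1) ^ 2
    - 2 * β * x ^ (β - 1) * (2 * (x ^ β + 1) * (β * x ^ (β - 1)))) / ((x ^ β + 1) ^ 2) ^ 2

lemma Gf_deriv (β x : ℝ) (hx : 0 < x) : HasDerivAt (Gf β) (Gf1 β x) x := by
  have hp : HasDerivAt (fun y : ℝ => y ^ β) (β * x ^ (β - 1)) x :=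
    Real.hasDerivAt_rpow_const (Or.inl hx.ne')
  have hd : x ^ β + 1 ≠ 0 := by positivity
  have h := (hp.sub_const 1).div (hp.add_const 1) hd
  refine HasDerivAt.congr_deriv (f := Gf β) h ?_
  unfold Gf1
  field_simp
  ring

lemma Gf1_deriv (β x : ℝ) (hx : 0 < x) : HasDerivAt (Gf1 β) (Gf2 β x) x := by
  have hp : HasDerivAt (fun y : ℝ => y ^ β) (β * x ^ (β - 1)) x :=
    Real.hasDerivAt_rpow_const (Or.inl hx.ne')
  have hN : HasDerivAt (fun y : ℝ => 2 * β * y ^ (β - 1)) (2 * β * ((β - 1) * x ^ (β - 2))) x := by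
    have h := (Real.hasDerivAt_rpow_const (x := x) (p := β - 1) (Or.inl hx.ne')).const_mul (2 * β)
    simpa [show β - 1 - 1 = β - 2 by ring] using h
  have hD : HasDerivAt (fun y : ℝ => (y ^ β + 1) ^ 2)
      ((2 : ℕ) * (x ^ β + 1) ^ (2 - 1) * (β * x ^ (β - 1))) x := (hp.add_const 1).pow 2
  have hd : (x ^ β + 1) ^ 2 ≠ 0 := by positivity
  have h := hN.div hD hd
  refine HasDerivAt.congr_deriv (f := Gf1 β) h ?_
  unfold Gf2
  push_cast
  ring_nf

lemma second_deriv (β s a : ℝ) (hs : 0 < s) :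
    iteratedDeriv 2 (fun t : ℝ => Gf β (s + 2 * a * t + t ^ 2)) 0
      = 4 * a ^ 2 * Gf2 β s + 2 * Gf1 β s := by
  have hu : ∀ t : ℝ, HasDerivAt (fun t : ℝ => s + 2 * a * t + t ^ 2) (2 * a + 2 * t) t := by
    intro t
    have h1 : HasDerivAt (fun t : ℝ => s + 2 * a * t) (2 * a) t := by
      simpa using ((hasDerivAt_id t).const_mul (2 * a)).const_add s
    have h2 := hasDerivAt_pow 2 t
    refine HasDerivAt.congr_deriv (f := fun t : ℝ => s + 2 * a * t + t ^ 2) (h1.add h2) ?_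
    push_cast; ring
  have hcont : Continuous (fun t : ℝ => s + 2 * a * t + t ^ 2) := by continuity
  have h0 : (0 : ℝ) < s + 2 * a * 0 + 0 ^ 2 := by simpa using hs
  have hpos : ∀ᶠ t in nhds (0 : ℝ), 0 < s + 2 * a * t + t ^ 2 :=
    (hcont.tendsto 0).eventually (eventually_gt_nhds h0)
  have hderiv_eq : (fun t => deriv (fun t : ℝ => Gf β (s + 2 * a * t + t ^ 2)) t)
      =ᶠ[nhds (0:ℝ)] fun t => Gf1 β (s + 2 * a * t + t ^ 2) * (2 * a + 2 * t) := by
    filter_upwards [hpos] with t ht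
    exact (((Gf_deriv β _ ht).comp t (hu t))).deriv
  have h1 : HasDerivAt (fun t : ℝ => Gf1 β (s + 2 * a * t + t ^ 2))
      (Gf2 β s * (2 * a + 2 * 0)) 0 := by
    have hg : HasDerivAt (Gf1 β) (Gf2 β s) (s + 2 * a * 0 + 0 ^ 2) := by
      rw [show s + 2 * a * 0 + 0 ^ 2 = s by ring]
      exact Gf1_deriv β s hs
    simpa [Function.comp_def] using hg.comp 0 (hu 0)
  have h2 : HasDerivAt (fun t : ℝ => 2 * a + 2 * t) 2 0 := by
    simpa using ((hasDerivAt_id (0:ℝ)).const_mul 2).const_add (2 * a)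
  have hmul : HasDerivAt (fun t => Gf1 β (s + 2 * a * t + t ^ 2) * (2 * a + 2 * t)) _ 0 := h1.mul h2
  rw [iteratedDeriv_two']
  rw [Filter.EventuallyEq.deriv_eq hderiv_eq, hmul.deriv]
  rw [show s + 2 * a * 0 + 0 ^ 2 = s by ring]
  ring

lemma algebra_step (β s : ℝ) (hs : 0 < s) :
    (4 * s * Gf2 β s + 4 * Gf1 β s)
      + 8 * β ^ 2 * (s ^ β / s) / (1 + s ^ β) ^ 2 * ((s ^ β - 1) / (s ^ β + 1)) = 0 := by
  have hA : (0:ℝ) < s ^ β := Real.rpow_pos_of_pos hs β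
  have h1 : s ^ (β - 1) = s ^ β / s := by
    rw [Real.rpow_sub hs, Real.rpow_one]
  have h2 : s ^ (β - 2) = s ^ β / s ^ 2 := by
    rw [Real.rpow_sub hs, Real.rpow_two]
  have hAne : s ^ β + 1 ≠ 0 := by positivity
  have hAne' : 1 + s ^ β ≠ 0 := by positivity
  unfold Gf2 Gf1
  rw [h1, h2]
  field_simp
  ring

theorem stmt3 (α : ℝ) (hα : α > -1)
    (Z : EuclideanSpace ℝ (Fin 2) → ℝ)
    (hZ : ∀ z, Z z = (‖z‖ ^ (2 * (1 + α)) - 1) / (‖z‖ ^ (2 * (1 + α)) + 1)) :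
    ∀ z : EuclideanSpace ℝ (Fin 2), z ≠ 0 →
      laplacian Z z
        + (8 * (1 + α) ^ 2 * ‖z‖ ^ (2 * α) / (1 + ‖z‖ ^ (2 * (1 + α))) ^ 2) * Z z = 0 := by
  intro z hz
  have hr : 0 < ‖z‖ := norm_pos_iff.mpr hz
  set β : ℝ := 1 + α with hβdef
  set s : ℝ := ‖z‖ ^ 2 with hsdef
  have hs : 0 < s := by positivity
  have hpow : ∀ w : EuclideanSpace ℝ (Fin 2), ‖w‖ ^ (2 * β) = (‖w‖ ^ 2 : ℝ) ^ β := by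
    intro w
    rw [← Real.rpow_natCast ‖w‖ 2, ← Real.rpow_mul (norm_nonneg w)]
    norm_num
  have hZG : ∀ w : EuclideanSpace ℝ (Fin 2), Z w = Gf β (‖w‖ ^ 2) := by
    intro w
    rw [hZ, hpow]
    rfl
  have hsb : ‖z‖ ^ (2 * β) = s ^ β := by rw [hpow]
  have hsa : ‖z‖ ^ (2 * α) = s ^ β / s := by
    rw [show (2 * α) = 2 * β - 2 by rw [hβdef]; ring, Real.rpow_sub hr, hsb]
    congr 1
    rw [hsdef, ← Real.rpow_two]
  have hnorm : ∀ (i : Fin 2) (t : ℝ),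
      ‖z + t • EuclideanSpace.single i (1:ℝ)‖ ^ 2 = s + 2 * (z i) * t + t ^ 2 := by
    intro i t
    rw [norm_add_sq_real, real_inner_smul_right, EuclideanSpace.inner_single_right,
      norm_smul, EuclideanSpace.norm_single]
    simp only [starRingEnd_apply, star_trivial, Real.norm_eq_abs, norm_one, mul_one, mul_pow,
      sq_abs]
    rw [hsdef]
    ring
  have hsum : (z 0) ^ 2 + (z 1) ^ 2 = s := by
    rw [hsdef, EuclideanSpace.norm_eq, Real.sq_sqrt (by positivity)]
    simp [Fin.sum_univ_two, Real.norm_eq_abs, sq_abs]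
  have hlap : laplacian Z z = 4 * s * Gf2 β s + 4 * Gf1 β s := by
    unfold laplacian
    have hre : ∀ i : Fin 2, (fun t : ℝ => Z (z + t • EuclideanSpace.single i (1:ℝ)))
        = fun t => Gf β (s + 2 * (z i) * t + t ^ 2) := by
      intro i; funext t; rw [hZG, hnorm]
    rw [Fin.sum_univ_two, hre 0, hre 1, second_deriv β s (z 0) hs, second_deriv β s (z 1) hs]
    linear_combination (4 * Gf2 β s) * hsum
  rw [hlap, hZ z, hsa, hsb]
  have := algebra_step β s hs
  linarith
end

section
/- Let α ∈ (-1, ∞), and for j = 1 define f_1 = (1/2) U_1², where U_1(z) = log( 8(1+α)² / (1+|z|^{2(1+α)})² ). Then the constant C_1 = 8(1+α)² ∫_0^∞ t^{1+2α} ((t^{2(1+α)} - 1)/(t^{2(1+α)} + 1)³) f_1(t) dt equals 12(1+α) − 4(1+α) log(8(1+α)²). -/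
open MeasureTheory Real

noncomputable def auxA (L w : ℝ) : ℝ :=
  (4*L - 8 - L^2 + (4*L - 8) * Real.log w - 4 * (Real.log w)^2) / w +
  (L^2 - 2*L + 2 + (4 - 4*L) * Real.log w + 4 * (Real.log w)^2) / w^2

lemma auxA_deriv (L : ℝ) {w : ℝ} (hw : 0 < w) :
    HasDerivAt (auxA L) ((w - 2) / w^3 * (L - 2 * Real.log w)^2) w := by
  have hw' : w ≠ 0 := ne_of_gt hw
  have hl : HasDerivAt Real.log w⁻¹ w := Real.hasDerivAt_log hw'
  have hl2 : HasDerivAt (fun w => (Real.log w)^2) ((2:ℕ) * (Real.log w)^1 * w⁻¹) w := hl.pow 2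
  have h1 : HasDerivAt (fun w => 4*L - 8 - L^2 + (4*L - 8) * Real.log w - 4 * (Real.log w)^2)
      ((4*L - 8) * w⁻¹ - 4 * ((2:ℕ) * (Real.log w)^1 * w⁻¹)) w := by
    exact ((hl.const_mul (4*L-8)).const_add (4*L - 8 - L^2)).sub (hl2.const_mul 4)
  have h2 : HasDerivAt (fun w => L^2 - 2*L + 2 + (4 - 4*L) * Real.log w + 4 * (Real.log w)^2)
      ((4 - 4*L) * w⁻¹ + 4 * ((2:ℕ) * (Real.log w)^1 * w⁻¹)) w := by
    exact ((hl.const_mul (4 - 4*L)).const_add (L^2 - 2*L + 2)).add (hl2.const_mul 4)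
  have hq1 := h1.div (hasDerivAt_id w) hw'
  have hq2 := h2.div (hasDerivAt_pow 2 w) (pow_ne_zero 2 hw')
  have := hq1.add hq2
  refine this.congr_deriv ?_
  simp only [id]
  field_simp
  ring

lemma auxA_tendsto (L : ℝ) : Filter.Tendsto (auxA L) Filter.atTop (nhds 0) := by
  have key : ∀ c0 c1 c2 : ℝ, Filter.Tendsto
      (fun w => (c0 + c1 * Real.log w + c2 * (Real.log w)^2) / w) Filter.atTop (nhds 0) := by
    intro c0 c1 c2
    have h : ∀ n : ℕ, Filter.Tendsto (fun w : ℝ => (Real.log w)^n / w) Filter.atTop (nhds 0) := by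
      intro n
      simpa using Real.tendsto_pow_log_div_mul_add_atTop 1 0 n one_ne_zero
    have := ((h 0).const_mul c0).add (((h 1).const_mul c1).add ((h 2).const_mul c2))
    simp only [pow_zero, pow_one, mul_zero, add_zero] at this
    refine this.congr fun w => ?_
    ring
  have h1 := key (4*L - 8 - L^2) (4*L - 8) (-4)
  have h2 := (key (L^2 - 2*L + 2) (4 - 4*L) 4).mul tendsto_inv_atTop_zero
  rw [mul_zero] at h2
  have := h1.add h2
  rw [add_zero] at this
  refine this.congr fun w => ?_
  simp only [auxA]
  have hdd : ∀ a w : ℝ, a / w * w⁻¹ = a / w ^ 2 := fun a w => by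
    rw [div_eq_mul_inv, div_eq_mul_inv, mul_assoc, ← mul_inv, ← pow_two]
  rw [hdd]
  ring

theorem stmt13 (α : ℝ) (hα : α > -1) :
    IntegrableOn (fun t : ℝ =>
      8 * (1 + α) ^ 2 * t ^ (1 + 2 * α) *
        ((t ^ (2 * (1 + α)) - 1) / (t ^ (2 * (1 + α)) + 1) ^ 3) *
        ((1 / 2) * (Real.log (8 * (1 + α) ^ 2 / (1 + t ^ (2 * (1 + α))) ^ 2)) ^ 2))
      (Set.Ioi 0) ∧
    ∫ t in Set.Ioi (0 : ℝ),
        8 * (1 + α) ^ 2 * t ^ (1 + 2 * α) *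
          ((t ^ (2 * (1 + α)) - 1) / (t ^ (2 * (1 + α)) + 1) ^ 3) *
          ((1 / 2) * (Real.log (8 * (1 + α) ^ 2 / (1 + t ^ (2 * (1 + α))) ^ 2)) ^ 2)
      = 12 * (1 + α) - 4 * (1 + α) * Real.log (8 * (1 + α) ^ 2) := by
  have hb : (0:ℝ) < 1 + α := by linarith
  set b : ℝ := 1 + α with hbdef
  set L : ℝ := Real.log (8 * b ^ 2) with hL
  set F : ℝ → ℝ := fun t =>
      8 * b ^ 2 * t ^ (1 + 2 * α) *
        ((t ^ (2 * b) - 1) / (t ^ (2 * b) + 1) ^ 3) *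
        ((1 / 2) * (Real.log (8 * b ^ 2 / (1 + t ^ (2 * b)) ^ 2)) ^ 2) with hF
  set G : ℝ → ℝ := fun t => 2 * b * auxA L (1 + t ^ (2 * b)) with hG
  -- derivative
  have hexp : (1 : ℝ) + 2 * α = 2 * b - 1 := by rw [hbdef]; ring
  have hderiv : ∀ t ∈ Set.Ioi (0:ℝ), HasDerivAt G (F t) t := by
    intro t ht
    have ht : (0:ℝ) < t := ht
    have hs : (0:ℝ) < t ^ (2 * b) := Real.rpow_pos_of_pos ht _
    have hrp : HasDerivAt (fun t : ℝ => t ^ (2 * b)) (2 * b * t ^ (2 * b - 1)) t :=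
      Real.hasDerivAt_rpow_const (Or.inl (ne_of_gt ht))
    have hin : HasDerivAt (fun t : ℝ => 1 + t ^ (2 * b)) (2 * b * t ^ (2 * b - 1)) t :=
      hrp.const_add 1
    have hA := auxA_deriv L (show (0:ℝ) < 1 + t ^ (2 * b) by linarith)
    have hcomp := (hA.comp t hin).const_mul (2 * b)
    refine hcomp.congr_deriv ?_
    have hlog : Real.log (8 * b ^ 2 / (1 + t ^ (2 * b)) ^ 2)
        = L - 2 * Real.log (1 + t ^ (2 * b)) := by
      rw [Real.log_div (by positivity) (by positivity), Real.log_pow]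
      push_cast
      rw [hL]
    rw [hF]
    beta_reduce
    rw [hlog, hexp]
    ring
  -- continuity at 0 within Ici 0
  have hrpc : ContinuousWithinAt (fun t : ℝ => t ^ (2 * b)) (Set.Ici 0) 0 :=
    (Real.continuousAt_rpow_const 0 (2*b) (Or.inr (by positivity))).continuousWithinAt
  have hzero : (0:ℝ) ^ (2 * b) = 0 := Real.zero_rpow (by positivity)
  have hAc : ContinuousAt (auxA L) (1 + (0:ℝ) ^ (2 * b)) := by
    rw [hzero, add_zero]
    have hlc : ContinuousAt Real.log 1 := Real.continuousAt_log one_ne_zero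
    unfold auxA
    fun_prop (disch := norm_num)
  have hic : ContinuousWithinAt (fun t : ℝ => 1 + t ^ (2 * b)) (Set.Ici 0) 0 :=
    continuousWithinAt_const.add hrpc
  have hcomp0 : ContinuousWithinAt (fun t : ℝ => auxA L (1 + t ^ (2 * b))) (Set.Ici 0) 0 :=
    ContinuousAt.comp_continuousWithinAt (g := auxA L)
      (f := fun t : ℝ => 1 + t ^ (2 * b)) hAc hic
  have hcont : ContinuousWithinAt G (Set.Ici 0) 0 := hcomp0.const_mul _
  -- limit at infinity
  have htop : Filter.Tendsto G Filter.atTop (nhds 0) := by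
    have hinner : Filter.Tendsto (fun t : ℝ => 1 + t ^ (2 * b)) Filter.atTop Filter.atTop :=
      Filter.tendsto_atTop_add_const_left _ 1 (tendsto_rpow_atTop (by positivity))
    have := ((auxA_tendsto L).comp hinner).const_mul (2 * b)
    simpa using this
  -- integrability on Ioi 1
  have hint1 : IntegrableOn F (Set.Ioi 1) := by
    refine integrableOn_Ioi_deriv_of_nonneg
      ((hderiv 1 (by norm_num)).continuousAt.continuousWithinAt)
      (fun x hx => hderiv x (show (0:ℝ) < x from lt_trans one_pos hx)) ?_ htop
    intro x hx
    have hx1 : (1:ℝ) < x := hx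
    have hs1 : (1:ℝ) ≤ x ^ (2 * b) := by
      rw [show (1:ℝ) = 1 ^ (2*b) by rw [Real.one_rpow]]
      exact Real.rpow_le_rpow (by norm_num) hx1.le (by positivity)
    have hx0 : (0:ℝ) < x := lt_trans one_pos hx1
    rw [hF]
    have h1 : (0:ℝ) ≤ x ^ (1 + 2*α) := (Real.rpow_pos_of_pos hx0 _).le
    have h2 : (0:ℝ) ≤ (x ^ (2 * b) - 1) / (x ^ (2 * b) + 1) ^ 3 := by
      apply div_nonneg (by linarith) (by positivity)
    positivity
  -- integrability on Ioc 0 1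
  have hFc : ContinuousOn F (Set.Ioi 0) := by
    rw [hF]
    intro t ht
    have ht : (0:ℝ) < t := ht
    have h1 : ContinuousAt (fun t : ℝ => t ^ (1 + 2 * α)) t :=
      Real.continuousAt_rpow_const t _ (Or.inl (ne_of_gt ht))
    have h2 : ContinuousAt (fun t : ℝ => t ^ (2 * b)) t :=
      Real.continuousAt_rpow_const t _ (Or.inl (ne_of_gt ht))
    have hs : (0:ℝ) < t ^ (2 * b) := Real.rpow_pos_of_pos ht _
    apply ContinuousAt.continuousWithinAt
    apply ContinuousAt.mul
    apply ContinuousAt.mul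
    · exact continuousAt_const.mul h1
    · exact (h2.sub continuousAt_const).div ((h2.add continuousAt_const).pow 3) (by positivity)
    · apply continuousAt_const.mul
      apply ContinuousAt.pow
      apply ContinuousAt.log
      · exact continuousAt_const.div ((continuousAt_const.add h2).pow 2) (by positivity)
      · positivity
  have hint0 : IntegrableOn F (Set.Ioc 0 1) := by
    set C : ℝ := 8 * b ^ 2 * ((1/2) * (|L| + 2 * Real.log 2)^2) with hC
    have hCnn : 0 ≤ C := by positivity
    have hmaj : IntegrableOn (fun t : ℝ => C * t ^ (1 + 2 * α)) (Set.Ioc 0 1) := by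
      have := intervalIntegral.intervalIntegrable_rpow' (a := 0) (b := 1)
        (r := 1 + 2*α) (by linarith)
      rw [intervalIntegrable_iff_integrableOn_Ioc_of_le zero_le_one] at this
      exact this.const_mul C
    refine Integrable.mono hmaj ((hFc.mono Set.Ioc_subset_Ioi_self).aestronglyMeasurable
      measurableSet_Ioc) ?_
    rw [ae_restrict_iff' measurableSet_Ioc]
    refine Filter.Eventually.of_forall fun t ht => ?_
    obtain ⟨ht0, ht1⟩ := ht
    have hs : (0:ℝ) < t ^ (2 * b) := Real.rpow_pos_of_pos ht0 _
    have hs1 : t ^ (2 * b) ≤ 1 := Real.rpow_le_one ht0.le ht1 (by positivity)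
    have htp : (0:ℝ) < t ^ (1 + 2*α) := Real.rpow_pos_of_pos ht0 _
    have hlog : Real.log (8 * b ^ 2 / (1 + t ^ (2 * b)) ^ 2)
        = L - 2 * Real.log (1 + t ^ (2 * b)) := by
      rw [Real.log_div (by positivity) (by positivity), Real.log_pow]
      push_cast
      rw [hL]
    have hv0 : (0:ℝ) ≤ Real.log (1 + t ^ (2 * b)) :=
      Real.log_nonneg (by linarith)
    have hv2 : Real.log (1 + t ^ (2 * b)) ≤ Real.log 2 :=
      Real.log_le_log (by linarith) (by linarith)
    have habs : |L - 2 * Real.log (1 + t ^ (2 * b))| ≤ |L| + 2 * Real.log 2 := by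
      have := abs_sub (L) (2 * Real.log (1 + t ^ (2 * b)))
      calc |L - 2 * Real.log (1 + t ^ (2 * b))|
          ≤ |L| + |2 * Real.log (1 + t ^ (2 * b))| := abs_sub _ _
        _ ≤ |L| + 2 * Real.log 2 := by
            rw [abs_mul, abs_of_nonneg hv0]
            simp only [abs_two]
            nlinarith
    have hsq : (Real.log (8 * b ^ 2 / (1 + t ^ (2 * b)) ^ 2))^2 ≤ (|L| + 2 * Real.log 2)^2 := by
      rw [hlog, ← sq_abs]
      exact pow_le_pow_left₀ (abs_nonneg _) habs 2
    have hq : |(t ^ (2 * b) - 1) / (t ^ (2 * b) + 1) ^ 3| ≤ 1 := by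
      rw [abs_div, abs_of_nonneg (by positivity : (0:ℝ) ≤ (t ^ (2*b)+1)^3)]
      rw [div_le_one (by positivity)]
      calc |t ^ (2 * b) - 1| = 1 - t ^ (2 * b) := by rw [abs_of_nonpos (by linarith)]; ring
        _ ≤ 1 := by linarith
        _ ≤ (t ^ (2 * b) + 1) ^ 3 := by nlinarith
    rw [hF]
    beta_reduce
    rw [Real.norm_eq_abs, Real.norm_eq_abs,
      abs_of_nonneg (by positivity : (0:ℝ) ≤ C * t ^ (1 + 2*α))]
    have e1 : |8 * b ^ 2| = 8 * b ^ 2 := abs_of_nonneg (by positivity)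
    have e2 : |t ^ (1 + 2*α)| = t ^ (1 + 2*α) := abs_of_nonneg htp.le
    calc |8 * b ^ 2 * t ^ (1 + 2 * α) * ((t ^ (2 * b) - 1) / (t ^ (2 * b) + 1) ^ 3) *
            (1 / 2 * Real.log (8 * b ^ 2 / (1 + t ^ (2 * b)) ^ 2) ^ 2)|
        = 8 * b ^ 2 * t ^ (1 + 2*α) * |(t ^ (2 * b) - 1) / (t ^ (2 * b) + 1) ^ 3| *
            (1 / 2 * Real.log (8 * b ^ 2 / (1 + t ^ (2 * b)) ^ 2) ^ 2) := by
          rw [abs_mul, abs_mul, abs_mul, e1, e2,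
            abs_of_nonneg (by positivity : (0:ℝ) ≤ 1 / 2 * Real.log (8 * b ^ 2 / (1 + t ^ (2 * b)) ^ 2) ^ 2)]
      _ ≤ 8 * b ^ 2 * t ^ (1 + 2*α) * 1 * (1 / 2 * (|L| + 2 * Real.log 2)^2) := by
          apply mul_le_mul
          · apply mul_le_mul_of_nonneg_left hq (by positivity)
          · nlinarith
          · positivity
          · positivity
      _ = C * t ^ (1 + 2*α) := by rw [hC]; ring
  have hint : IntegrableOn F (Set.Ioi 0) := by
    rw [show Set.Ioi (0:ℝ) = Set.Ioc 0 1 ∪ Set.Ioi 1 from (Set.Ioc_union_Ioi_eq_Ioi zero_le_one).symm]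
    exact hint0.union hint1
  refine ⟨hint, ?_⟩
  have hval := integral_Ioi_of_hasDerivAt_of_tendsto hcont hderiv hint htop
  rw [hval]
  have hG0 : G 0 = 2 * b * (2 * L - 6) := by
    rw [hG]
    beta_reduce
    rw [hzero, add_zero]
    unfold auxA
    rw [Real.log_one]
    ring
  rw [hG0]
  ring
end

section
/- With V_{1,0}(z) = log(8/(1+|z|²)²) and f̃_1 = (1/2) V_{1,0}², the constant C̃_1 = 8 ∫_0^∞ t ((t²-1)/(t²+1)³) f̃_1(t) dt equals 12 − 4 log 8. -/
open MeasureTheory Real Filter Set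

noncomputable def Hfun (u : ℝ) : ℝ :=
  (-2*(Real.log 8 - 2*Real.log u)^2 + 8*(Real.log 8 - 2*Real.log u) - 16)/u
  + (2*(Real.log 8 - 2*Real.log u)^2 - 4*(Real.log 8 - 2*Real.log u) + 4)/u^2

noncomputable def Ffun (t : ℝ) : ℝ := Hfun (1 + t^2)

lemma hF (t : ℝ) : HasDerivAt Ffun
    (8 * (t * ((t ^ 2 - 1) / (t ^ 2 + 1) ^ 3) *
        ((1 / 2) * (Real.log (8 / (1 + t ^ 2) ^ 2)) ^ 2))) t := by
  have hupos : (0:ℝ) < 1 + t^2 := by positivity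
  have hu : HasDerivAt (fun t : ℝ => 1 + t^2) (2*t) t := by
    simpa using (hasDerivAt_pow 2 t).const_add 1
  have hlog : HasDerivAt (fun t : ℝ => Real.log (1 + t^2)) (2*t/(1+t^2)) t :=
    hu.log (ne_of_gt hupos)
  have hg : HasDerivAt (fun t : ℝ => Real.log 8 - 2*Real.log (1+t^2))
      (-(2*(2*t/(1+t^2)))) t := (hlog.const_mul 2).const_sub (Real.log 8)
  set g' : ℝ := -(2*(2*t/(1+t^2))) with hg'
  have hN1 : HasDerivAt (fun t : ℝ =>
      -2*(Real.log 8 - 2*Real.log (1+t^2))^2 + 8*(Real.log 8 - 2*Real.log (1+t^2)) - 16)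
      (-2*(2*(Real.log 8 - 2*Real.log (1+t^2))^1*g') + 8*g') t := by
    exact (((hg.pow 2).const_mul (-2)).add (hg.const_mul 8)).sub_const 16
  have hN2 : HasDerivAt (fun t : ℝ =>
      2*(Real.log 8 - 2*Real.log (1+t^2))^2 - 4*(Real.log 8 - 2*Real.log (1+t^2)) + 4)
      (2*(2*(Real.log 8 - 2*Real.log (1+t^2))^1*g') - 4*g') t := by
    exact (((hg.pow 2).const_mul 2).sub (hg.const_mul 4)).add_const 4
  have hu2 : HasDerivAt (fun t : ℝ => (1+t^2)^2) (2*(1+t^2)^1*(2*t)) t := hu.pow 2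
  have key := (hN1.div hu (ne_of_gt hupos)).add (hN2.div hu2 (by positivity))
  have hlogeq : Real.log (8 / (1 + t ^ 2) ^ 2) = Real.log 8 - 2*Real.log (1+t^2) := by
    rw [Real.log_div (by norm_num) (by positivity), Real.log_pow]
    push_cast; ring
  refine (key : HasDerivAt Ffun _ t).congr_deriv ?_
  rw [hlogeq, hg']
  field_simp
  ring

lemma hHtend : Tendsto Hfun atTop (nhds 0) := by
  have h0 : Tendsto (fun u : ℝ => 1/u) atTop (nhds 0) := by
    simpa using tendsto_inv_atTop_zero (𝕜 := ℝ)
  have h1 : Tendsto (fun u : ℝ => Real.log u / u) atTop (nhds 0) := by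
    simpa using Real.tendsto_pow_log_div_mul_add_atTop 1 0 1 one_ne_zero
  have h2 : Tendsto (fun u : ℝ => (Real.log u)^2 / u) atTop (nhds 0) := by
    simpa using Real.tendsto_pow_log_div_mul_add_atTop 1 0 2 one_ne_zero
  set L := Real.log 8
  have heq : Hfun = fun u : ℝ =>
      (-2*L^2+8*L-16)*(1/u) + (8*L-16)*(Real.log u/u) + (-8)*((Real.log u)^2/u)
      + (2*L^2-4*L+4)*((1/u)*(1/u)) + (8-8*L)*((Real.log u/u)*(1/u))
      + 8*(((Real.log u)^2/u)*(1/u)) := by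
    funext u
    simp only [Hfun, div_eq_mul_inv]
    ring
  rw [heq]
  have := (((((h0.const_mul (-2*L^2+8*L-16)).add (h1.const_mul (8*L-16))).add
    (h2.const_mul (-8))).add ((h0.mul h0).const_mul (2*L^2-4*L+4))).add
    ((h1.mul h0).const_mul (8-8*L))).add ((h2.mul h0).const_mul 8)
  simpa using this

lemma hFtend : Tendsto Ffun atTop (nhds 0) := by
  have hcomp : Tendsto (fun t : ℝ => 1 + t^2) atTop atTop :=
    tendsto_atTop_add_const_left _ 1 (tendsto_pow_atTop two_ne_zero)
  exact hHtend.comp hcomp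

lemma hfcont : Continuous (fun t : ℝ =>
    8 * (t * ((t ^ 2 - 1) / (t ^ 2 + 1) ^ 3) *
      ((1 / 2) * (Real.log (8 / (1 + t ^ 2) ^ 2)) ^ 2))) := by
  have h1 : Continuous (fun t : ℝ => (8:ℝ) / (1 + t ^ 2) ^ 2) :=
    continuous_const.div (by continuity) (fun t => by positivity)
  have h2 : Continuous (fun t : ℝ => Real.log (8 / (1 + t ^ 2) ^ 2)) :=
    h1.log (fun t => by positivity)
  have h3 : Continuous (fun t : ℝ => (t ^ 2 - 1) / (t ^ 2 + 1) ^ 3) :=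
    (by continuity : Continuous fun t : ℝ => t^2-1).div (by continuity) (fun t => by positivity)
  continuity

theorem stmt14 :
    IntegrableOn (fun t : ℝ =>
      8 * (t * ((t ^ 2 - 1) / (t ^ 2 + 1) ^ 3) *
        ((1 / 2) * (Real.log (8 / (1 + t ^ 2) ^ 2)) ^ 2)))
      (Set.Ioi 0) ∧
    ∫ t in Set.Ioi (0 : ℝ),
        8 * (t * ((t ^ 2 - 1) / (t ^ 2 + 1) ^ 3) *
          ((1 / 2) * (Real.log (8 / (1 + t ^ 2) ^ 2)) ^ 2))
      = 12 - 4 * Real.log 8 := by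
  set f : ℝ → ℝ := fun t =>
      8 * (t * ((t ^ 2 - 1) / (t ^ 2 + 1) ^ 3) *
        ((1 / 2) * (Real.log (8 / (1 + t ^ 2) ^ 2)) ^ 2)) with hf
  have hint : IntegrableOn f (Set.Ioi 0) := by
    have hI1 : IntegrableOn f (Set.Ioc 0 1) :=
      (hfcont.integrableOn_Icc (a := 0) (b := 1)).mono_set Set.Ioc_subset_Icc_self
    have hI2 : IntegrableOn f (Set.Ioi 1) := by
      apply integrableOn_Ioi_deriv_of_nonneg
        ((hF 1).continuousAt.continuousWithinAt) (fun x hx => hF x)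
        ?_ hFtend
      intro x hx
      have hx1 : (1:ℝ) ≤ x := le_of_lt hx
      have h1 : (0:ℝ) ≤ x ^ 2 - 1 := by nlinarith
      have : (0:ℝ) ≤ (x ^ 2 - 1) / (x ^ 2 + 1) ^ 3 := by positivity
      have hx0 : (0:ℝ) ≤ x := by linarith
      positivity
    have : Set.Ioc (0:ℝ) 1 ∪ Set.Ioi 1 = Set.Ioi 0 := Set.Ioc_union_Ioi_eq_Ioi zero_le_one
    rw [← this]
    exact hI1.union hI2
  refine ⟨hint, ?_⟩
  have := integral_Ioi_of_hasDerivAt_of_tendsto (a := 0) (m := 0)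
    ((hF 0).continuousAt.continuousWithinAt) (fun x hx => hF x) hint hFtend
  rw [this]
  have : Ffun 0 = 4 * Real.log 8 - 12 := by
    simp [Ffun, Hfun]
    ring
  rw [this]; ring
end
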